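/- Let $T > 0$, $\gamma \in [0,1]$, and let $\Phi$ be a bounded linear operator on $L^2(\mathbb{R})$ with operator norm $\|\Phi\|_c > 0$. Suppose $u \in C([0,T]; L^2(\mathbb{R}))$ and $h \in L^2(0,T;L^2(\mathbb{R}))$ satisfy $\|u(t)\|_{L^2}^2 - \|u(0)\|_{L^2}^2 = 2\,\mathrm{Re}(-i\int_0^t (\Phi h(s), u(s))_{L^2} ds)$ for all $t \in [0,T]$, with $\|u(0)\|_{L^2}^2 = 4$ and $\|u(T)\|_{L^2}^2 < 4(1-\gamma)$. Then $\|h\|_{L^2(0,T;L^2(\mathbb{R}))}^2 > \frac{2(1+\gamma)}{T\|\Phi\|_c^2}\left(\sqrt{1 + \left(\frac{\gamma}{1+\gamma}\right)^2} - 1\right). -/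

import Mathlib

open MeasureTheory
set_option maxHeartbeats 1000000 in

/-- Second upper bound of Proposition 7: if `u : [0,T] → L²(ℝ)` and
`h ∈ L²(0,T;L²(ℝ))` satisfy the momentum identity
`‖u(t)‖² - ‖u(0)‖² = 2 Re(-i ∫₀ᵗ (u(s), Φh(s)) ds)`, with `‖u(0)‖² = 4` and
`‖u(T)‖² < 4(1-γ)`, then
`‖h‖² > (2(1+γ)/(T‖Φ‖²)) (√(1+(γ/(1+γ))²) - 1)`. -/
theorem stmt_11 (T γ : ℝ) (hT : 0 < T) (hγ : γ ∈ Set.Icc (0 : ℝ) 1)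
    (Φ : Lp ℂ 2 (volume : Measure ℝ) →L[ℂ] Lp ℂ 2 (volume : Measure ℝ))
    (hΦ : 0 < ‖Φ‖)
    (u h : ℝ → Lp ℂ 2 (volume : Measure ℝ))
    (hu : Continuous u)
    (hh : IntervalIntegrable (fun s => ‖h s‖ ^ 2) volume 0 T)
    (hint : ∀ t ∈ Set.Icc (0 : ℝ) T,
      IntervalIntegrable (fun s => (inner ℂ (u s) (Φ (h s)) : ℂ)) volume 0 t)
    (hident : ∀ t ∈ Set.Icc (0 : ℝ) T,
      ‖u t‖ ^ 2 - ‖u 0‖ ^ 2 =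
        2 * ((-Complex.I) * ∫ s in (0 : ℝ)..t, (inner ℂ (u s) (Φ (h s)) : ℂ)).re)
    (hu0 : ‖u 0‖ ^ 2 = 4) (huT : ‖u T‖ ^ 2 < 4 * (1 - γ)) :
    2 * (1 + γ) / (T * ‖Φ‖ ^ 2) * (Real.sqrt (1 + (γ / (1 + γ)) ^ 2) - 1) <
      ∫ s in (0 : ℝ)..T, ‖h s‖ ^ 2 := by
  obtain ⟨hγ0, hγ1⟩ := hγ
  have hT0 : (0:ℝ) ≤ T := hT.le
  set K := ‖Φ‖ with hK
  -- measurability of ‖h ·‖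
  have hgm : AEStronglyMeasurable (fun s => ‖h s‖) (volume.restrict (Set.uIoc (0:ℝ) T)) := by
    have h1 : AEStronglyMeasurable (fun s => ‖h s‖^2) (volume.restrict (Set.uIoc (0:ℝ) T)) := by
      rw [Set.uIoc_of_le hT0]; exact hh.1.aestronglyMeasurable
    have h2 := Real.continuous_sqrt.comp_aestronglyMeasurable h1
    have h3 : (fun s => Real.sqrt (‖h s‖^2)) = fun s => ‖h s‖ :=
      funext fun s => Real.sqrt_sq (norm_nonneg _)
    rwa [h3] at h2
  have hgi : IntervalIntegrable (fun s => ‖h s‖) volume 0 T := by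
    refine IntervalIntegrable.mono_fun (f := fun s => 1 + ‖h s‖^2)
      (intervalIntegrable_const.add hh) hgm ?_
    refine Filter.Eventually.of_forall fun s => ?_
    have h1 : (0:ℝ) ≤ 1 + ‖h s‖^2 := by positivity
    simp only [Real.norm_eq_abs]
    rw [abs_of_nonneg (norm_nonneg _), abs_of_nonneg h1]
    nlinarith [sq_nonneg (‖h s‖ - 1)]
  have hfg : IntervalIntegrable (fun s => ‖u s‖ * ‖h s‖) volume 0 T :=
    hgi.continuousOn_mul hu.norm.continuousOn
  have hf2 : IntervalIntegrable (fun s => ‖u s‖^2) volume 0 T :=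
    ((hu.norm.pow 2).intervalIntegrable 0 T)
  set D := ∫ s in (0:ℝ)..T, ‖u s‖ * ‖h s‖ with hD
  set A := ∫ s in (0:ℝ)..T, ‖u s‖^2 with hA
  set H := ∫ s in (0:ℝ)..T, ‖h s‖^2 with hHdef
  have hD0 : 0 ≤ D := intervalIntegral.integral_nonneg hT0
    (fun s _ => mul_nonneg (norm_nonneg _) (norm_nonneg _))
  have hH0 : 0 ≤ H := intervalIntegral.integral_nonneg hT0 (fun s _ => sq_nonneg _)
  have hA0 : 0 ≤ A := intervalIntegral.integral_nonneg hT0 (fun s _ => sq_nonneg _)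
  clear_value D A H
  -- key bound on the momentum term
  have hR : ∀ t ∈ Set.Icc (0:ℝ) T,
      |2 * ((-Complex.I) * ∫ s in (0:ℝ)..t, (inner ℂ (u s) (Φ (h s)) : ℂ)).re| ≤ 2 * K * D := by
    intro t ht
    obtain ⟨ht0, htT⟩ := ht
    set z := ∫ s in (0:ℝ)..t, (inner ℂ (u s) (Φ (h s)) : ℂ) with hz
    have hsub1 : Set.uIcc (0:ℝ) t ⊆ Set.uIcc (0:ℝ) T := by
      rw [Set.uIcc_of_le ht0, Set.uIcc_of_le hT0]
      exact Set.Icc_subset_Icc le_rfl htT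
    have hsub2 : Set.uIcc t T ⊆ Set.uIcc (0:ℝ) T := by
      rw [Set.uIcc_of_le htT, Set.uIcc_of_le hT0]
      exact Set.Icc_subset_Icc ht0 le_rfl
    have hKfg : IntervalIntegrable (fun s => K * (‖u s‖ * ‖h s‖)) volume 0 T :=
      hfg.const_mul K
    have step1 : |2 * ((-Complex.I) * z).re| ≤ 2 * ‖z‖ := by
      rw [abs_mul, abs_two]
      have h1 : |((-Complex.I) * z).re| ≤ ‖(-Complex.I) * z‖ :=
        Complex.abs_re_le_norm _
      have h2 : ‖(-Complex.I) * z‖ = ‖z‖ := by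
        rw [norm_mul, norm_neg, Complex.norm_I, one_mul]
      nlinarith [h1, h2 ▸ h1]
    have step2 : ‖z‖ ≤ ∫ s in (0:ℝ)..t, ‖(inner ℂ (u s) (Φ (h s)) : ℂ)‖ :=
      intervalIntegral.norm_integral_le_integral_norm ht0
    have step3 : (∫ s in (0:ℝ)..t, ‖(inner ℂ (u s) (Φ (h s)) : ℂ)‖)
        ≤ ∫ s in (0:ℝ)..t, K * (‖u s‖ * ‖h s‖) := by
      refine intervalIntegral.integral_mono_on ht0 (hint t ⟨ht0, htT⟩).norm
        (hKfg.mono_set hsub1) fun s _ => ?_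
      calc ‖(inner ℂ (u s) (Φ (h s)) : ℂ)‖ ≤ ‖u s‖ * ‖Φ (h s)‖ := norm_inner_le_norm _ _
        _ ≤ ‖u s‖ * (K * ‖h s‖) :=
            mul_le_mul_of_nonneg_left (Φ.le_opNorm _) (norm_nonneg _)
        _ = K * (‖u s‖ * ‖h s‖) := by ring
    have step4 : (∫ s in (0:ℝ)..t, K * (‖u s‖ * ‖h s‖)) ≤ K * D := by
      have hadd := intervalIntegral.integral_add_adjacent_intervals
        (hKfg.mono_set hsub1) (hKfg.mono_set hsub2)
      have hnn : 0 ≤ ∫ s in t..T, K * (‖u s‖ * ‖h s‖) :=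
        intervalIntegral.integral_nonneg htT fun s _ =>
          mul_nonneg hΦ.le (mul_nonneg (norm_nonneg _) (norm_nonneg _))
      have heq : (∫ s in (0:ℝ)..T, K * (‖u s‖ * ‖h s‖)) = K * D := by
        rw [hD, ← intervalIntegral.integral_const_mul]
      linarith [hadd, hnn, heq]
    calc |2 * ((-Complex.I) * z).re| ≤ 2 * ‖z‖ := step1
      _ ≤ 2 * (K * D) := by linarith [step2.trans step3 |>.trans step4]
      _ = 2 * K * D := by ring
  -- 4γ < 2KD
  have hw : 4 * γ < 2 * K * D := by
    have hid := hident T ⟨hT0, le_rfl⟩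
    have hRT := hR T ⟨hT0, le_rfl⟩
    rw [hu0] at hid
    have : -(2 * ((-Complex.I) * ∫ s in (0:ℝ)..T, (inner ℂ (u s) (Φ (h s)) : ℂ)).re) > 4*γ := by
      nlinarith [hid, huT]
    calc 4*γ < -(2 * ((-Complex.I) * ∫ s in (0:ℝ)..T, (inner ℂ (u s) (Φ (h s)) : ℂ)).re) := this
      _ ≤ |2 * ((-Complex.I) * ∫ s in (0:ℝ)..T, (inner ℂ (u s) (Φ (h s)) : ℂ)).re| := neg_le_abs _
      _ ≤ 2 * K * D := hRT
  -- A ≤ (4 + 2KD) T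
  have hA4 : A ≤ (4 + 2*K*D) * T := by
    have hmono : A ≤ ∫ _ in (0:ℝ)..T, (4 + 2*K*D) := by
      rw [hA]
      refine intervalIntegral.integral_mono_on hT0 hf2 intervalIntegrable_const fun t ht => ?_
      have hid := hident t ht
      rw [hu0] at hid
      have := hR t ht
      have h1 := abs_le.1 this
      linarith [h1.2, hid]
    rwa [intervalIntegral.integral_const, smul_eq_mul, sub_zero, mul_comm] at hmono
  -- Cauchy-Schwarz: D^2 ≤ A * H
  have hCS : D^2 ≤ A * H := by
    have key : ∀ ε : ℝ, 0 < ε → 2 * D ≤ ε * A + H / ε := by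
      intro ε hε
      have h1 : (∫ s in (0:ℝ)..T, 2 * (‖u s‖ * ‖h s‖))
          ≤ ∫ s in (0:ℝ)..T, (ε * ‖u s‖^2 + ‖h s‖^2 / ε) := by
        refine intervalIntegral.integral_mono_on hT0 (hfg.const_mul 2)
          ((hf2.const_mul ε).add (hh.div_const ε)) fun s _ => ?_
        have h0 : 2 * (‖u s‖ * ‖h s‖) - ε * ‖u s‖^2 ≤ ‖h s‖^2 / ε := by
          rw [le_div_iff₀ hε]; nlinarith [sq_nonneg (ε * ‖u s‖ - ‖h s‖)]
        linarith
      have h2 : (∫ s in (0:ℝ)..T, 2 * (‖u s‖ * ‖h s‖)) = 2 * D := by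
        rw [hD, ← intervalIntegral.integral_const_mul]
      have h3 : (∫ s in (0:ℝ)..T, (ε * ‖u s‖^2 + ‖h s‖^2 / ε)) = ε * A + H / ε := by
        rw [intervalIntegral.integral_add (hf2.const_mul ε) (hh.div_const ε),
          intervalIntegral.integral_const_mul, intervalIntegral.integral_div, ← hA, ← hHdef]
      linarith [h1, h2 ▸ h1, h3]
    by_contra hc
    push_neg at hc
    have hDpos : 0 < D := by nlinarith [mul_nonneg hA0 hH0]
    rcases eq_or_lt_of_le hA0 with hA0' | hApos
    · rcases eq_or_lt_of_le hH0 with hH0' | hHpos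
      · have := key 1 one_pos
        rw [← hA0', ← hH0'] at this
        simp at this
        linarith
      · have := key (H / D) (div_pos hHpos hDpos)
        rw [← hA0'] at this
        have hq : H / (H / D) = D := by field_simp
        rw [hq] at this
        linarith
    · have := key (D / A) (div_pos hDpos hApos)
      have hq1 : D / A * A = D := by field_simp
      rw [hq1] at this
      have hq2 : H / (D / A) = H * A / D := by field_simp
      rw [hq2] at this
      have h5 : D ≤ H * A / D := by linarith
      rw [le_div_iff₀ hDpos] at h5
      nlinarith [h5, hc]
  -- final numeric step
  have hTK : (0:ℝ) < T * K^2 := mul_pos hT (pow_pos hΦ 2)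
  have hy : γ^2 < T * K^2 * H * (1 + γ) := by
    by_contra hcon
    push_neg at hcon
    set w := 2 * K * D with hwdef
    set y := T * K^2 * H with hydef
    clear_value w y
    have hw2 : w^2 ≤ 16*y + 4*y*w := by
      have h1 : A * H ≤ ((4 + w) * T) * H := mul_le_mul_of_nonneg_right hA4 hH0
      have h2 : D^2 ≤ ((4 + w) * T) * H := hCS.trans h1
      have h3 : (2*K)^2 * D^2 ≤ (2*K)^2 * (((4 + w) * T) * H) :=
        mul_le_mul_of_nonneg_left h2 (by positivity)
      calc w^2 = (2*K)^2 * D^2 := by rw [hwdef]; ring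
        _ ≤ (2*K)^2 * (((4 + w) * T) * H) := h3
        _ = 16*y + 4*y*w := by rw [hydef, hwdef]; ring
    have hy0 : 0 ≤ y := by rw [hydef]; exact mul_nonneg (mul_nonneg hT0 (sq_nonneg K)) hH0
    have hyγ : y ≤ γ := by nlinarith
    have hpos2 : 0 < w + 4*γ - 4*y := by nlinarith
    nlinarith [mul_pos (by linarith : (0:ℝ) < w - 4*γ) hpos2, hw2, hcon]
  have h1γ : (0:ℝ) < 1 + γ := by linarith
  have hs : Real.sqrt (1 + (γ/(1+γ))^2) ≤ 1 + (γ/(1+γ))^2 / 2 := by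
    have h1 : (1 + (γ/(1+γ))^2 : ℝ) ≤ (1 + (γ/(1+γ))^2 / 2)^2 := by nlinarith [sq_nonneg ((γ/(1+γ))^2)]
    have h2 := Real.sqrt_le_sqrt h1
    rwa [Real.sqrt_sq (by positivity)] at h2
  have e1 : 2*(1+γ)/(T*K^2) * (Real.sqrt (1+(γ/(1+γ))^2) - 1) ≤ γ^2/((1+γ)*(T*K^2)) := by
    have hfac : (0:ℝ) ≤ 2*(1+γ)/(T*K^2) := div_nonneg (by linarith) hTK.le
    have h1 : Real.sqrt (1+(γ/(1+γ))^2) - 1 ≤ (γ/(1+γ))^2/2 := by linarith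
    calc 2*(1+γ)/(T*K^2) * (Real.sqrt (1+(γ/(1+γ))^2) - 1)
        ≤ 2*(1+γ)/(T*K^2) * ((γ/(1+γ))^2/2) := mul_le_mul_of_nonneg_left h1 hfac
      _ = γ^2/((1+γ)*(T*K^2)) := by field_simp
  have e2 : γ^2/((1+γ)*(T*K^2)) < H := by
    rw [div_lt_iff₀ (mul_pos h1γ hTK)]
    nlinarith [hy]
  linarith [e1, e2]
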